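/- arXiv:math/0612806 — 3 statements merged into one kernel-verified Lean document; each statement's English description precedes it below -/
import Mathlib

section
/- Let H be a Hopf 𝒢-algebra in a braided monoidal category and let L be a right integral of H. Then the family {S_g ∘ L_g : 𝟙 → H_ḡ}_{g ∈ 𝒢} is a left integral of H, i.e. writing L'_g = S_ḡ ∘ L_ḡ : 𝟙 → H_g, one has m_{g,h} ∘ (id_{H_g} ⊗ L'_h) = L'_{gh} ∘ ε_g whenever gh is defined. -/
open CategoryTheory MonoidalCategory

universe w₁ w₂ v u

namespace HopfPaper

section Groupoids

variable {G : Type w₂} [Groupoid.{w₁} G]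

@[simp] lemma ginv_inv {i j : G} (g : i ⟶ j) : Groupoid.inv (Groupoid.inv g) = g := by
  simp [Groupoid.inv_eq_inv]

@[simp] lemma ginv_id (i : G) : Groupoid.inv (𝟙 i) = 𝟙 i := by
  simp [Groupoid.inv_eq_inv]

@[simp] lemma ginv_comp {i j k : G} (g : i ⟶ j) (h : j ⟶ k) :
    Groupoid.inv (g ≫ h) = Groupoid.inv h ≫ Groupoid.inv g := by
  simp [Groupoid.inv_eq_inv]

@[simp] lemma ginv_comp_self_assoc {i j : G} (g : i ⟶ j) {k : G} (t : j ⟶ k) :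
    Groupoid.inv g ≫ g ≫ t = t := by
  rw [← Category.assoc, Groupoid.inv_comp, Category.id_comp]

@[simp] lemma gcomp_inv_self_assoc {i j : G} (g : i ⟶ j) {k : G} (t : i ⟶ k) :
    g ≫ Groupoid.inv g ≫ t = t := by
  rw [← Category.assoc, Groupoid.comp_inv, Category.id_comp]

@[simp] lemma ginv_eqToHom {i j : G} (e : i = j) :
    Groupoid.inv (eqToHom e) = eqToHom e.symm := by
  subst e; simp [Groupoid.inv_eq_inv]

end Groupoids

section MidSwap

variable {C : Type u} [Category.{v} C] [MonoidalCategory C] [BraidedCategory C]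

/-- The middle-four interchange `(X ⊗ Y) ⊗ (Z ⊗ W) ⟶ (X ⊗ Z) ⊗ (Y ⊗ W)`, braiding the two
middle factors (the implicit `id ⊗ γ ⊗ id` of the paper). -/
def midSwap (X Y Z W : C) : (X ⊗ Y) ⊗ (Z ⊗ W) ⟶ (X ⊗ Z) ⊗ (Y ⊗ W) :=
  (α_ X Y (Z ⊗ W)).hom ≫ (X ◁ (α_ Y Z W).inv) ≫ (X ◁ ((β_ Y Z).hom ▷ W)) ≫
    (X ◁ (α_ Z Y W).hom) ≫ (α_ X Z (Y ⊗ W)).inv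

end MidSwap

/-- A Hopf `G`-algebra in a braided monoidal category `C` (Bobtcheva–Piergallini).
Composition is written in diagrammatic order (`f ≫ g` is "`g ∘ f`"), and `eqToHom`s are
inserted where the paper identifies equal objects. -/
structure HopfG (G : Type w₂) [Groupoid.{w₁} G]
    (C : Type u) [Category.{v} C] [MonoidalCategory C] [BraidedCategory C] where
  /-- the underlying family of objects, indexed by the morphisms of `G` -/
  H : ∀ {i j : G}, (i ⟶ j) → C
  /-- comultiplication -/
  Δ : ∀ {i j : G} (g : i ⟶ j), H g ⟶ H g ⊗ H g
  /-- counit -/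
  ε : ∀ {i j : G} (g : i ⟶ j), H g ⟶ 𝟙_ C
  /-- multiplication -/
  mul : ∀ {i j k : G} (g : i ⟶ j) (h : j ⟶ k), H g ⊗ H h ⟶ H (g ≫ h)
  /-- unit -/
  η : ∀ i : G, 𝟙_ C ⟶ H (𝟙 i)
  /-- antipode -/
  S : ∀ {i j : G} (g : i ⟶ j), H g ⟶ H (Groupoid.inv g)
  /-- inverse of the antipode -/
  Sbar : ∀ {i j : G} (g : i ⟶ j), H g ⟶ H (Groupoid.inv g)
  /-- (a1) coassociativity -/
  coassoc : ∀ {i j : G} (g : i ⟶ j),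
    Δ g ≫ (Δ g ▷ H g) ≫ (α_ (H g) (H g) (H g)).hom = Δ g ≫ (H g ◁ Δ g)
  /-- (a2) counit -/
  counit_l : ∀ {i j : G} (g : i ⟶ j), Δ g ≫ (ε g ▷ H g) ≫ (λ_ (H g)).hom = 𝟙 (H g)
  /-- (a2') counit -/
  counit_r : ∀ {i j : G} (g : i ⟶ j), Δ g ≫ (H g ◁ ε g) ≫ (ρ_ (H g)).hom = 𝟙 (H g)
  /-- (a3) associativity of multiplication -/
  mul_assoc : ∀ {i j k l : G} (f : i ⟶ j) (g : j ⟶ k) (h : k ⟶ l),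
    (mul f g ▷ H h) ≫ mul (f ≫ g) h =
      (α_ (H f) (H g) (H h)).hom ≫ (H f ◁ mul g h) ≫ mul f (g ≫ h) ≫
        eqToHom (by rw [Category.assoc])
  /-- (a5) compatibility of multiplication and comultiplication -/
  Δ_mul : ∀ {i j k : G} (g : i ⟶ j) (h : j ⟶ k),
    mul g h ≫ Δ (g ≫ h) =
      (Δ g ⊗ₘ Δ h) ≫ midSwap (H g) (H g) (H h) (H h) ≫ (mul g h ⊗ₘ mul g h)
  /-- (a6) -/
  ε_mul : ∀ {i j k : G} (g : i ⟶ j) (h : j ⟶ k),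
    mul g h ≫ ε (g ≫ h) = (ε g ⊗ₘ ε h) ≫ (λ_ (𝟙_ C)).hom
  /-- (a4) right unit -/
  mul_one : ∀ {i j : G} (g : i ⟶ j),
    (H g ◁ η j) ≫ mul g (𝟙 j) ≫ eqToHom (by rw [Category.comp_id]) = (ρ_ (H g)).hom
  /-- (a4') left unit -/
  one_mul : ∀ {i j : G} (g : i ⟶ j),
    (η i ▷ H g) ≫ mul (𝟙 i) g ≫ eqToHom (by rw [Category.id_comp]) = (λ_ (H g)).hom
  /-- (a7) -/
  Δ_one : ∀ i : G, η i ≫ Δ (𝟙 i) = (λ_ (𝟙_ C)).inv ≫ (η i ⊗ₘ η i)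
  /-- (a8) -/
  ε_one : ∀ i : G, η i ≫ ε (𝟙 i) = 𝟙 (𝟙_ C)
  /-- (s1) -/
  antipode_l : ∀ {i j : G} (g : i ⟶ j),
    Δ g ≫ (S g ▷ H g) ≫ mul (Groupoid.inv g) g ≫ eqToHom (by rw [Groupoid.inv_comp]) =
      ε g ≫ η j
  /-- (s1') -/
  antipode_r : ∀ {i j : G} (g : i ⟶ j),
    Δ g ≫ (H g ◁ S g) ≫ mul g (Groupoid.inv g) ≫ eqToHom (by rw [Groupoid.comp_inv]) =
      ε g ≫ η i
  /-- (s2) `S̄_ḡ ∘ S_g = id` -/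
  S_Sbar : ∀ {i j : G} (g : i ⟶ j),
    S g ≫ Sbar (Groupoid.inv g) ≫ eqToHom (by rw [ginv_inv]) = 𝟙 (H g)
  /-- (s2') `S_ḡ ∘ S̄_g = id` -/
  Sbar_S : ∀ {i j : G} (g : i ⟶ j),
    Sbar g ≫ S (Groupoid.inv g) ≫ eqToHom (by rw [ginv_inv]) = 𝟙 (H g)

namespace HopfG

variable {G : Type w₂} [Groupoid.{w₁} G]
variable {C : Type u} [Category.{v} C] [MonoidalCategory C] [BraidedCategory C]
variable (D : HopfG G C)

lemma H_eq {a b a' b' : G} (f : a ⟶ b) (f' : a' ⟶ b')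
    (ha : a = a') (hb : b = b') (h : f = eqToHom ha ≫ f' ≫ eqToHom hb.symm) :
    D.H f = D.H f' := by
  subst ha; subst hb
  simp only [eqToHom_refl, Category.comp_id, Category.id_comp] at h
  rw [h]

/-- a left cointegral of `H` -/
def IsLeftCointegral (l : ∀ i : G, D.H (𝟙 i) ⟶ 𝟙_ C) : Prop :=
  ∀ i : G, D.Δ (𝟙 i) ≫ (D.H (𝟙 i) ◁ l i) ≫ (ρ_ (D.H (𝟙 i))).hom = l i ≫ D.η i

/-- a right cointegral of `H` -/
def IsRightCointegral (l : ∀ i : G, D.H (𝟙 i) ⟶ 𝟙_ C) : Prop :=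
  ∀ i : G, D.Δ (𝟙 i) ≫ (l i ▷ D.H (𝟙 i)) ≫ (λ_ (D.H (𝟙 i))).hom = l i ≫ D.η i

/-- a right integral of `H` -/
def IsRightIntegral (L : ∀ {i j : G} (g : i ⟶ j), 𝟙_ C ⟶ D.H g) : Prop :=
  ∀ (i j k : G) (g : i ⟶ j) (h : j ⟶ k),
    (λ_ (D.H h)).inv ≫ (L g ▷ D.H h) ≫ D.mul g h = D.ε h ≫ L (g ≫ h)

/-- a left integral of `H` -/
def IsLeftIntegral (L : ∀ {i j : G} (g : i ⟶ j), 𝟙_ C ⟶ D.H g) : Prop :=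
  ∀ (i j k : G) (g : i ⟶ j) (h : j ⟶ k),
    (ρ_ (D.H g)).inv ≫ (D.H g ◁ L h) ≫ D.mul g h = D.ε g ≫ L (g ≫ h)

/-- the coform `Λ_g = Δ_g ∘ L_g` -/
def coform (L : ∀ {i j : G} (g : i ⟶ j), 𝟙_ C ⟶ D.H g) {i j : G} (g : i ⟶ j) :
    𝟙_ C ⟶ D.H g ⊗ D.H g := L g ≫ D.Δ g

/-- the form `λ_g = l_i ∘ m_{g,ḡ} ∘ (id ⊗ S_g)` -/
def form (l : ∀ i : G, D.H (𝟙 i) ⟶ 𝟙_ C) {i j : G} (g : i ⟶ j) :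
    D.H g ⊗ D.H g ⟶ 𝟙_ C :=
  (D.H g ◁ D.S g) ≫ D.mul g (Groupoid.inv g) ≫ eqToHom (by rw [Groupoid.comp_inv]) ≫ l i

end HopfG

end HopfPaper

namespace HopfPaper

open HopfG

variable {G : Type w₂} [Groupoid.{w₁} G]
variable {C : Type u} [Category.{v} C] [MonoidalCategory C] [BraidedCategory C]

namespace HopfG

variable (D : HopfG G C)

/-! ### Transport lemmas along equalities of morphisms in `G` -/

lemma ε_transport {i j : G} {f f' : i ⟶ j} (hf : f = f') (e : D.H f = D.H f') :
    eqToHom e ≫ D.ε f' = D.ε f := by subst hf; simp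

lemma S_transport {i j : G} {f f' : i ⟶ j} (hf : f = f')
    (e : D.H f = D.H f') (e' : D.H (Groupoid.inv f) = D.H (Groupoid.inv f')) :
    eqToHom e ≫ D.S f' = D.S f ≫ eqToHom e' := by subst hf; simp

lemma mul_transport {i j k : G} {p p' : i ⟶ j} {q q' : j ⟶ k} (hp : p = p') (hq : q = q')
    (e : D.H p = D.H p') (e' : D.H q = D.H q') (e'' : D.H (p ≫ q) = D.H (p' ≫ q')) :
    (eqToHom e ⊗ₘ eqToHom e') ≫ D.mul p' q' = D.mul p q ≫ eqToHom e'' := by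
  subst hp; subst hq; simp [tensorHom_id, id_tensorHom]

lemma mul_transport_left {i j k : G} {p p' : i ⟶ j} (q : j ⟶ k) (hp : p = p')
    (e : D.H p = D.H p') (e'' : D.H (p ≫ q) = D.H (p' ≫ q)) :
    (eqToHom e ▷ D.H q) ≫ D.mul p' q = D.mul p q ≫ eqToHom e'' := by
  subst hp; simp

lemma mul_transport_right {i j k : G} (p : i ⟶ j) {q q' : j ⟶ k} (hq : q = q')
    (e : D.H q = D.H q') (e'' : D.H (p ≫ q) = D.H (p ≫ q')) :
    (D.H p ◁ eqToHom e) ≫ D.mul p q' = D.mul p q ≫ eqToHom e'' := by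
  subst hq; simp

/-! ### The counit is preserved by the antipode -/

lemma S_ε {i j : G} (g : i ⟶ j) : D.S g ≫ D.ε (Groupoid.inv g) = D.ε g := by
  have h := congrArg (· ≫ D.ε (𝟙 j)) (D.antipode_l g)
  simp only [Category.assoc] at h
  rw [D.ε_transport (Groupoid.inv_comp g), D.ε_one, Category.comp_id, D.ε_mul] at h
  rw [← h, tensorHom_def']
  simp only [Category.assoc]
  rw [← whisker_exchange_assoc]
  conv_lhs => rw [← Category.id_comp (D.S g), ← D.counit_r g]
  simp only [Category.assoc]
  rw [unitors_equal]
  congr 1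
  congr 1
  rw [← rightUnitor_naturality (D.S g ≫ D.ε (Groupoid.inv g))]
  simp [comp_whiskerRight]

lemma Sbar_ε {i j : G} (g : i ⟶ j) : D.Sbar g ≫ D.ε (Groupoid.inv g) = D.ε g := by
  conv_rhs => rw [← Category.id_comp (D.ε g), ← D.Sbar_S g]
  simp only [Category.assoc]
  rw [D.ε_transport (ginv_inv g), D.S_ε]


/-! ### Primed (eqToHom-shuffled) versions of the axioms -/

lemma mul_one' {i j : G} (g : i ⟶ j) :
    (D.H g ◁ D.η j) ≫ D.mul g (𝟙 j) = (ρ_ (D.H g)).hom ≫ eqToHom (by rw [Category.comp_id]) := by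
  conv_rhs => rw [← D.mul_one g]
  simp

lemma one_mul' {i j : G} (g : i ⟶ j) :
    (D.η i ▷ D.H g) ≫ D.mul (𝟙 i) g = (λ_ (D.H g)).hom ≫ eqToHom (by rw [Category.id_comp]) := by
  conv_rhs => rw [← D.one_mul g]
  simp

lemma antipode_l' {i j : G} (g : i ⟶ j) :
    D.Δ g ≫ (D.S g ▷ D.H g) ≫ D.mul (Groupoid.inv g) g =
      D.ε g ≫ D.η j ≫ eqToHom (by rw [Groupoid.inv_comp]) := by
  conv_rhs => rw [← Category.assoc, ← D.antipode_l g]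
  simp

lemma antipode_r' {i j : G} (g : i ⟶ j) :
    D.Δ g ≫ (D.H g ◁ D.S g) ≫ D.mul g (Groupoid.inv g) =
      D.ε g ≫ D.η i ≫ eqToHom (by rw [Groupoid.comp_inv]) := by
  conv_rhs => rw [← Category.assoc, ← D.antipode_r g]
  simp

/-! ### Comonoid objects -/

/-- The comonoid object underlying `H g`. -/
def comon {i j : G} (g : i ⟶ j) : Comon C where
  X := D.H g
  comon := {
    counit := D.ε g
    comul := D.Δ g
    counit_comul := by rw [← cancel_mono (λ_ (D.H g)).hom]; simpa [Category.assoc] using D.counit_l g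
    comul_counit := by rw [← cancel_mono (ρ_ (D.H g)).hom]; simpa [Category.assoc] using D.counit_r g
    comul_assoc := by simpa [Category.assoc] using (D.coassoc g).symm }

@[simp] lemma comon_X {i j : G} (g : i ⟶ j) : (D.comon g).X = D.H g := rfl

@[simp] lemma comon_comul {i j : G} (g : i ⟶ j) :
    ComonObj.comul (X := (D.comon g).X) = D.Δ g := rfl

@[simp] lemma comon_counit {i j : G} (g : i ⟶ j) :
    ComonObj.counit (X := (D.comon g).X) = D.ε g := rfl

omit D in
lemma comon_tensor_comul (A B : Comon C) : ComonObj.comul (X := (A ⊗ B).X) =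
    (ComonObj.comul (X := A.X) ⊗ₘ ComonObj.comul (X := B.X)) ≫ tensorμ A.X A.X B.X B.X :=
  Comon.tensorObj_comul A.X B.X

omit D in
lemma comon_tensor_counit (A B : Comon C) : ComonObj.counit (X := (A ⊗ B).X) =
    (ComonObj.counit (X := A.X) ⊗ₘ ComonObj.counit (X := B.X)) ≫ (λ_ _).hom :=
  Comon.tensorObj_counit A.X B.X

/-! ### Convolution -/

/-- Convolution product of two morphisms from a comonoid. -/
def cv (A : Comon C) {i j k : G} (p : i ⟶ j) (q : j ⟶ k)
    (f : A.X ⟶ D.H p) (f' : A.X ⟶ D.H q) : A.X ⟶ D.H (p ≫ q) :=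
  ComonObj.comul (X := A.X) ≫ (f ⊗ₘ f') ≫ D.mul p q

lemma cv_transport_left (A : Comon C) {i j k : G} {p p' : i ⟶ j} (q : j ⟶ k)
    (hp : p = p') (e : D.H p = D.H p') (e' : D.H (p ≫ q) = D.H (p' ≫ q))
    (f : A.X ⟶ D.H p) (f' : A.X ⟶ D.H q) :
    D.cv A p' q (f ≫ eqToHom e) f' = D.cv A p q f f' ≫ eqToHom e' := by
  subst hp; simp [cv]

lemma cv_transport_right (A : Comon C) {i j k : G} (p : i ⟶ j) {q q' : j ⟶ k}
    (hq : q = q') (e : D.H q = D.H q') (e' : D.H (p ≫ q) = D.H (p ≫ q'))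
    (f : A.X ⟶ D.H p) (f' : A.X ⟶ D.H q) :
    D.cv A p q' f (f' ≫ eqToHom e) = D.cv A p q f f' ≫ eqToHom e' := by
  subst hq; simp [cv]

lemma cv_unit_r (A : Comon C) {i j : G} (p : i ⟶ j) (f : A.X ⟶ D.H p) :
    D.cv A p (𝟙 j) f (ComonObj.counit (X := A.X) ≫ D.η j) = f ≫ eqToHom (by rw [Category.comp_id]) := by
  simp only [cv, MonoidalCategory.tensorHom_def, Category.assoc, MonoidalCategory.whiskerLeft_comp]
  rw [D.mul_one', ← whisker_exchange_assoc, ComonObj.comul_counit_assoc,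
    ← rightUnitor_inv_naturality_assoc]
  simp

lemma cv_unit_l (A : Comon C) {j k : G} (q : j ⟶ k) (f : A.X ⟶ D.H q) :
    D.cv A (𝟙 j) q (ComonObj.counit (X := A.X) ≫ D.η j) f = f ≫ eqToHom (by rw [Category.id_comp]) := by
  simp only [cv, tensorHom_def', Category.assoc, MonoidalCategory.comp_whiskerRight]
  rw [D.one_mul', whisker_exchange_assoc, ComonObj.counit_comul_assoc,
    ← leftUnitor_inv_naturality_assoc]
  simp

lemma cv_assoc (A : Comon C) {i j k l : G} (p : i ⟶ j) (q : j ⟶ k) (r : k ⟶ l)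
    (f : A.X ⟶ D.H p) (f' : A.X ⟶ D.H q) (f'' : A.X ⟶ D.H r) :
    D.cv A (p ≫ q) r (D.cv A p q f f') f'' =
      D.cv A p (q ≫ r) f (D.cv A q r f' f'') ≫ eqToHom (by rw [Category.assoc]) := by
  simp only [cv]
  have e1 : ((ComonObj.comul (X := A.X) ≫ (f ⊗ₘ f') ≫ D.mul p q) ⊗ₘ f'') =
      (ComonObj.comul (X := A.X) ▷ A.X) ≫ ((f ⊗ₘ f') ⊗ₘ f'') ≫ (D.mul p q ▷ D.H r) := by
    conv_lhs => rw [show f'' = 𝟙 A.X ≫ f'' ≫ 𝟙 (D.H r) by simp]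
    rw [← tensorHom_comp_tensorHom, ← tensorHom_comp_tensorHom, tensorHom_id, tensorHom_id]
  have e2 : (f ⊗ₘ (ComonObj.comul (X := A.X) ≫ (f' ⊗ₘ f'') ≫ D.mul q r)) =
      (A.X ◁ ComonObj.comul (X := A.X)) ≫ (f ⊗ₘ (f' ⊗ₘ f'')) ≫ (D.H p ◁ D.mul q r) := by
    conv_lhs => rw [show f = 𝟙 A.X ≫ f ≫ 𝟙 (D.H p) by simp]
    rw [← tensorHom_comp_tensorHom, ← tensorHom_comp_tensorHom, id_tensorHom, id_tensorHom]
  rw [e1, e2]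
  simp only [Category.assoc]
  rw [D.mul_assoc p q r]
  rw [associator_naturality_assoc]
  rw [← ComonObj.comul_assoc_assoc]

lemma cv_assoc' (A : Comon C) {i j k l : G} (p : i ⟶ j) (q : j ⟶ k) (r : k ⟶ l)
    (f : A.X ⟶ D.H p) (f' : A.X ⟶ D.H q) (f'' : A.X ⟶ D.H r) :
    D.cv A p (q ≫ r) f (D.cv A q r f' f'') =
      D.cv A (p ≫ q) r (D.cv A p q f f') f'' ≫ eqToHom (by rw [Category.assoc]) := by
  rw [D.cv_assoc]; simp

/-- Uniqueness of two-sided convolution inverses. -/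
lemma cv_inv_unique (A : Comon C) {i j : G} (p : i ⟶ j) (a : A.X ⟶ D.H p)
    (u v : A.X ⟶ D.H (Groupoid.inv p))
    (hu : D.cv A (Groupoid.inv p) p u a =
      ComonObj.counit (X := A.X) ≫ D.η j ≫ eqToHom (by rw [Groupoid.inv_comp]))
    (hv : D.cv A p (Groupoid.inv p) a v =
      ComonObj.counit (X := A.X) ≫ D.η i ≫ eqToHom (by rw [Groupoid.comp_inv])) :
    u = v := by
  have hv' : ComonObj.counit (X := A.X) ≫ D.η i =
      D.cv A p (Groupoid.inv p) a v ≫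
        eqToHom (show D.H (p ≫ Groupoid.inv p) = D.H (𝟙 i) by rw [Groupoid.comp_inv]) := by
    rw [hv]; simp
  have hu' : D.cv A (Groupoid.inv p) p u a =
      (ComonObj.counit (X := A.X) ≫ D.η j) ≫
        eqToHom (show D.H (𝟙 j) = D.H (Groupoid.inv p ≫ p) by rw [Groupoid.inv_comp]) := by
    rw [hu]; simp
  have h1 := D.cv_unit_r A (Groupoid.inv p) u
  rw [hv'] at h1
  rw [D.cv_transport_right A (Groupoid.inv p) (Groupoid.comp_inv p)
    (show D.H (p ≫ Groupoid.inv p) = D.H (𝟙 i) by rw [Groupoid.comp_inv])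
    (show D.H (Groupoid.inv p ≫ p ≫ Groupoid.inv p) = D.H (Groupoid.inv p ≫ 𝟙 i) by
      rw [Groupoid.comp_inv])] at h1
  rw [D.cv_assoc'] at h1
  rw [hu'] at h1
  rw [D.cv_transport_left A (Groupoid.inv p) (Groupoid.inv_comp p).symm
    (show D.H (𝟙 j) = D.H (Groupoid.inv p ≫ p) by rw [Groupoid.inv_comp])
    (show D.H (𝟙 j ≫ Groupoid.inv p) = D.H ((Groupoid.inv p ≫ p) ≫ Groupoid.inv p) by
      rw [Groupoid.inv_comp])] at h1
  rw [D.cv_unit_l] at h1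
  simp only [Category.assoc, eqToHom_trans] at h1
  have := h1.symm
  rw [comp_eqToHom_iff] at this
  rw [this]
  simp

/-! ### Anti-multiplicativity of the antipode -/

lemma midSwap_eq_tensorμ (X Y Z W : C) : midSwap X Y Z W = tensorμ X Y Z W := rfl

lemma cv_Smul_mul {i j k : G} (g : i ⟶ j) (h : j ⟶ k) :
    D.cv (D.comon g ⊗ D.comon h) (Groupoid.inv (g ≫ h)) (g ≫ h)
        (D.mul g h ≫ D.S (g ≫ h)) (D.mul g h) =
      ComonObj.counit (X := (D.comon g ⊗ D.comon h).X) ≫ D.η k ≫ eqToHom (by rw [Groupoid.inv_comp]) := by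
  simp only [cv, Category.assoc]
  rw [comon_tensor_comul, comon_tensor_counit]
  simp only [comon_comul, comon_counit, Category.assoc]
  dsimp only [Comon.tensorObj_X, comon_X]
  have e1 : ((D.mul g h ≫ D.S (g ≫ h)) ⊗ₘ D.mul g h) =
      (D.mul g h ⊗ₘ D.mul g h) ≫ (D.S (g ≫ h) ▷ D.H (g ≫ h)) := by
    rw [← tensorHom_id, tensorHom_comp_tensorHom, Category.comp_id]
  rw [e1, ← midSwap_eq_tensorμ]
  simp only [Category.assoc]
  rw [← reassoc_of% (D.Δ_mul g h)]
  rw [D.antipode_l' (g ≫ h)]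
  rw [reassoc_of% (D.ε_mul g h)]

lemma eta_mul_braid {a b : G} {q : a ⟶ a} (hq : q = 𝟙 a) (r : a ⟶ b)
    (e : D.H (𝟙 a) = D.H q) :
    (D.H r ◁ D.η a) ≫ (D.H r ◁ eqToHom e) ≫ (β_ (D.H r) (D.H q)).hom ≫ D.mul q r =
      (ρ_ (D.H r)).hom ≫ eqToHom (by rw [hq, Category.id_comp]) := by
  subst hq
  simp only [eqToHom_refl, MonoidalCategory.whiskerLeft_id, Category.id_comp]
  rw [show D.H r ◁ D.η a = 𝟙 (D.H r) ⊗ₘ D.η a from (id_tensorHom _ _).symm]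
  rw [BraidedCategory.braiding_naturality_assoc (𝟙 (D.H r)) (D.η a)]
  rw [tensorHom_id]
  rw [D.one_mul' r]
  rw [braiding_tensorUnit_right]
  simp

lemma key_mul_Smul {i j k : G} (g : i ⟶ j) (h : j ⟶ k) :
    ((D.Δ g ⊗ₘ D.Δ h) ≫ tensorμ (D.H g) (D.H g) (D.H h) (D.H h)) ≫
        (D.mul g h ⊗ₘ ((D.S g ⊗ₘ D.S h) ≫ (β_ _ _).hom ≫ D.mul (Groupoid.inv h) (Groupoid.inv g))) ≫
        D.mul (g ≫ h) (Groupoid.inv h ≫ Groupoid.inv g) =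
      ((D.ε g ⊗ₘ D.ε h) ≫ (λ_ (𝟙_ C)).hom) ≫ D.η i ≫
        eqToHom (by rw [Category.assoc, gcomp_inv_self_assoc, Groupoid.comp_inv]) := by
  simp only [Category.assoc]
  rw [BraidedCategory.braiding_naturality_assoc]
  rw [tensorHom_def (D.mul g h)]
  simp only [Category.assoc]
  rw [← whisker_exchange_assoc]
  rw [D.mul_assoc g h (Groupoid.inv h ≫ Groupoid.inv g)]
  rw [associator_naturality_right_assoc]
  simp only [MonoidalCategory.whiskerLeft_comp, Category.assoc]
  rw [← MonoidalCategory.whiskerLeft_comp_assoc (D.H g)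
    (D.H h ◁ D.mul (Groupoid.inv h) (Groupoid.inv g))
    (D.mul h (Groupoid.inv h ≫ Groupoid.inv g))]
  have t1 : (D.H h ◁ D.mul (Groupoid.inv h) (Groupoid.inv g)) ≫
      D.mul h (Groupoid.inv h ≫ Groupoid.inv g) =
      (α_ (D.H h) (D.H (Groupoid.inv h)) (D.H (Groupoid.inv g))).inv ≫
        (D.mul h (Groupoid.inv h) ▷ D.H (Groupoid.inv g)) ≫
        D.mul (h ≫ Groupoid.inv h) (Groupoid.inv g) ≫
        eqToHom (by rw [Category.assoc]) := by
    rw [reassoc_of% (D.mul_assoc h (Groupoid.inv h) (Groupoid.inv g))]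
    simp
  rw [t1]
  simp only [MonoidalCategory.whiskerLeft_comp, Category.assoc]
  rw [reassoc_of% (D.mul_transport_right g (Category.assoc h (Groupoid.inv h) (Groupoid.inv g))
    (show D.H ((h ≫ Groupoid.inv h) ≫ Groupoid.inv g) = D.H (h ≫ Groupoid.inv h ≫ Groupoid.inv g)
      by rw [Category.assoc])
    (show D.H (g ≫ (h ≫ Groupoid.inv h) ≫ Groupoid.inv g) =
        D.H (g ≫ h ≫ Groupoid.inv h ≫ Groupoid.inv g) by rw [Category.assoc]))]
  rw [← MonoidalCategory.whiskerLeft_comp_assoc (D.H g)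
    (D.H h ◁ (D.S h ⊗ₘ D.S g))
    (α_ (D.H h) (D.H (Groupoid.inv h)) (D.H (Groupoid.inv g))).inv]
  have t2 : (D.H h ◁ (D.S h ⊗ₘ D.S g)) ≫
      (α_ (D.H h) (D.H (Groupoid.inv h)) (D.H (Groupoid.inv g))).inv =
      (α_ (D.H h) (D.H h) (D.H g)).inv ≫ ((D.H h ◁ D.S h) ⊗ₘ D.S g) := by
    simpa using associator_inv_naturality (𝟙 (D.H h)) (D.S h) (D.S g)
  rw [t2]
  simp only [MonoidalCategory.whiskerLeft_comp, Category.assoc]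
  rw [← MonoidalCategory.whiskerLeft_comp_assoc (D.H g)
    ((D.H h ◁ D.S h) ⊗ₘ D.S g)
    (D.mul h (Groupoid.inv h) ▷ D.H (Groupoid.inv g))]
  have t3 : ((D.H h ◁ D.S h) ⊗ₘ D.S g) ≫
      (D.mul h (Groupoid.inv h) ▷ D.H (Groupoid.inv g)) =
      (((D.H h ◁ D.S h) ≫ D.mul h (Groupoid.inv h)) ⊗ₘ D.S g) := by
    rw [← tensorHom_id, tensorHom_comp_tensorHom, Category.comp_id]
  rw [t3]
  have hex : tensorμ (D.H g) (D.H g) (D.H h) (D.H h) ≫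
      (α_ (D.H g) (D.H h) (D.H g ⊗ D.H h)).hom ≫
      (D.H g ◁ (D.H h ◁ (β_ (D.H g) (D.H h)).hom)) ≫
      (D.H g ◁ (α_ (D.H h) (D.H h) (D.H g)).inv) =
      (α_ (D.H g) (D.H g) (D.H h ⊗ D.H h)).hom ≫
        (D.H g ◁ (β_ (D.H g) (D.H h ⊗ D.H h)).hom) := by
    simp only [tensorμ, BraidedCategory.braiding_tensor_right_hom, MonoidalCategory.whiskerLeft_comp, Category.assoc]
    monoidal
  rw [reassoc_of% hex]
  rw [← MonoidalCategory.whiskerLeft_comp_assoc (D.H g)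
    (β_ (D.H g) (D.H h ⊗ D.H h)).hom
    ((D.H h ◁ D.S h ≫ D.mul h (Groupoid.inv h)) ⊗ₘ D.S g)]
  rw [(BraidedCategory.braiding_naturality (D.S g)
    (D.H h ◁ D.S h ≫ D.mul h (Groupoid.inv h))).symm]
  rw [tensorHom_def (D.S g) (D.H h ◁ D.S h ≫ D.mul h (Groupoid.inv h))]
  simp only [MonoidalCategory.whiskerLeft_comp, Category.assoc]
  rw [tensorHom_def (D.Δ g) (D.Δ h)]
  simp only [Category.assoc]
  rw [associator_naturality_right_assoc]
  rw [← MonoidalCategory.whiskerLeft_comp_assoc (D.H g) (D.H g ◁ D.Δ h)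
    (D.S g ▷ (D.H h ⊗ D.H h))]
  rw [whisker_exchange (D.S g) (D.Δ h)]
  simp only [MonoidalCategory.whiskerLeft_comp, Category.assoc]
  simp only [← MonoidalCategory.whiskerLeft_comp_assoc, ← MonoidalCategory.whiskerLeft_comp]
  rw [D.antipode_r' h]
  have t7 : D.H (Groupoid.inv g) ◁ (D.ε h ≫ D.η j ≫
        eqToHom (show D.H (𝟙 j) = D.H (h ≫ Groupoid.inv h) by rw [Groupoid.comp_inv])) ≫
      (β_ (D.H (Groupoid.inv g)) (D.H (h ≫ Groupoid.inv h))).hom ≫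
      D.mul (h ≫ Groupoid.inv h) (Groupoid.inv g) =
      (D.H (Groupoid.inv g) ◁ D.ε h) ≫ (ρ_ (D.H (Groupoid.inv g))).hom ≫
        eqToHom (by rw [Groupoid.comp_inv, Category.id_comp]) := by
    simp only [MonoidalCategory.whiskerLeft_comp, Category.assoc]
    rw [D.eta_mul_braid (Groupoid.comp_inv h) (Groupoid.inv g)]
  rw [t7]
  rw [← whisker_exchange_assoc (D.S g) (D.ε h)]
  rw [rightUnitor_naturality_assoc (D.S g)]
  simp only [MonoidalCategory.whiskerLeft_comp, Category.assoc]
  rw [reassoc_of% (D.mul_transport_right g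
    (show Groupoid.inv g = (h ≫ Groupoid.inv h) ≫ Groupoid.inv g by
      rw [Groupoid.comp_inv h, Category.id_comp])
    (show D.H (Groupoid.inv g) = D.H ((h ≫ Groupoid.inv h) ≫ Groupoid.inv g) by
      rw [Groupoid.comp_inv h, Category.id_comp])
    (show D.H (g ≫ Groupoid.inv g) = D.H (g ≫ (h ≫ Groupoid.inv h) ≫ Groupoid.inv g) by
      rw [Groupoid.comp_inv h, Category.id_comp]))]
  rw [← associator_naturality_right_assoc]
  rw [← whisker_exchange_assoc]
  have tri : (α_ (D.H g) (D.H g) (𝟙_ C)).hom ≫ (D.H g ◁ (ρ_ (D.H g)).hom) =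
      (ρ_ (D.H g ⊗ D.H g)).hom := by monoidal
  rw [reassoc_of% tri]
  rw [rightUnitor_naturality_assoc (D.Δ g)]
  rw [reassoc_of% (D.antipode_r' g)]
  have fin : (D.ε g ⊗ₘ D.ε h) ≫ (λ_ (𝟙_ C)).hom =
      (D.H g ◁ D.ε h) ≫ (ρ_ (D.H g)).hom ≫ D.ε g := by
    rw [tensorHom_def', Category.assoc, unitors_equal, rightUnitor_naturality]
  rw [reassoc_of% fin]
  simp

lemma cv_mul_Smul {i j k : G} (g : i ⟶ j) (h : j ⟶ k) :
    D.cv (D.comon g ⊗ D.comon h) (g ≫ h) (Groupoid.inv (g ≫ h))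
        (D.mul g h)
        ((D.S g ⊗ₘ D.S h) ≫ (β_ _ _).hom ≫ D.mul (Groupoid.inv h) (Groupoid.inv g) ≫
          eqToHom (by rw [ginv_comp])) =
      ComonObj.counit (X := (D.comon g ⊗ D.comon h).X) ≫ D.η i ≫ eqToHom (by rw [Groupoid.comp_inv]) := by
  erw [show ((D.S g ⊗ₘ D.S h) ≫ (β_ _ _).hom ≫ D.mul (Groupoid.inv h) (Groupoid.inv g) ≫
        eqToHom (by rw [ginv_comp] :
          D.H (Groupoid.inv h ≫ Groupoid.inv g) = D.H (Groupoid.inv (g ≫ h)))) =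
      ((D.S g ⊗ₘ D.S h) ≫ (β_ _ _).hom ≫ D.mul (Groupoid.inv h) (Groupoid.inv g)) ≫
        eqToHom (by rw [ginv_comp]) by simp]
  erw [D.cv_transport_right (D.comon g ⊗ D.comon h) (g ≫ h) (ginv_comp g h).symm
    (show D.H (Groupoid.inv h ≫ Groupoid.inv g) = D.H (Groupoid.inv (g ≫ h)) by rw [ginv_comp])
    (show D.H ((g ≫ h) ≫ Groupoid.inv h ≫ Groupoid.inv g) = D.H ((g ≫ h) ≫ Groupoid.inv (g ≫ h))
      by rw [ginv_comp])]
  simp only [cv, Category.assoc]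
  rw [comon_tensor_comul, comon_tensor_counit]
  simp only [comon_comul, comon_counit, Category.assoc]
  dsimp only [Comon.tensorObj_X, comon_X]
  simp only [Category.assoc]
  rw [reassoc_of% (D.key_mul_Smul g h)]
  simp

lemma mul_antipode {i j k : G} (g : i ⟶ j) (h : j ⟶ k) :
    D.mul g h ≫ D.S (g ≫ h) =
      (D.S g ⊗ₘ D.S h) ≫ (β_ (D.H (Groupoid.inv g)) (D.H (Groupoid.inv h))).hom ≫
        D.mul (Groupoid.inv h) (Groupoid.inv g) ≫ eqToHom (by rw [ginv_comp]) := by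
  refine D.cv_inv_unique (D.comon g ⊗ D.comon h) (g ≫ h) (D.mul g h) _ _
    (D.cv_Smul_mul g h) (D.cv_mul_Smul g h)


/-! ### Swapping a morphism from the unit object across a tensor factor -/

lemma unit_braid {P A B : C} (f : P ⟶ A) (t : 𝟙_ C ⟶ B) :
    (ρ_ P).inv ≫ (f ⊗ₘ t) = (λ_ P).inv ≫ (t ⊗ₘ f) ≫ (β_ B A).hom := by
  rw [BraidedCategory.braiding_naturality, braiding_tensorUnit_left]
  simp

lemma mul_transport_tensor_left {W V : C} {i j k : G} {p p' : i ⟶ j} (q : j ⟶ k)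
    (hp : p = p') (e : D.H p = D.H p') (e'' : D.H (p ≫ q) = D.H (p' ≫ q))
    (x : W ⟶ D.H p) (y : V ⟶ D.H q) :
    ((x ≫ eqToHom e) ⊗ₘ y) ≫ D.mul p' q = (x ⊗ₘ y) ≫ D.mul p q ≫ eqToHom e'' := by
  subst hp; simp

lemma LS_congr (L : ∀ {a b : G} (f : a ⟶ b), 𝟙_ C ⟶ D.H f) {a b : G} {f f' : a ⟶ b}
    (hf : f = f') {T : C} (e : D.H (Groupoid.inv f) = T) (e' : D.H (Groupoid.inv f') = T) :
    L f ≫ D.S f ≫ eqToHom e = L f' ≫ D.S f' ≫ eqToHom e' := by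
  subst hf; rfl

/-! ### The key computation for Statement 1 -/

lemma rightIntegral_S (L : ∀ {a b : G} (f : a ⟶ b), 𝟙_ C ⟶ D.H f)
    (hL : D.IsRightIntegral L) {i j k : G} (g : i ⟶ j) (h' : k ⟶ j) :
    (ρ_ (D.H g)).inv ≫ (D.H g ◁ (L h' ≫ D.S h')) ≫ D.mul g (Groupoid.inv h') =
      D.ε g ≫ L (h' ≫ Groupoid.inv g) ≫ D.S (h' ≫ Groupoid.inv g) ≫
        eqToHom (by rw [ginv_comp, ginv_inv]) := by
  rw [show D.H g ◁ (L h' ≫ D.S h') = (𝟙 (D.H g) ⊗ₘ (L h' ≫ D.S h')) from (id_tensorHom _ _).symm]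
  rw [← D.Sbar_S g]
  rw [← Category.assoc (D.Sbar g) (D.S (Groupoid.inv g))]
  rw [D.mul_transport_tensor_left (Groupoid.inv h') (ginv_inv g)
    (show D.H (Groupoid.inv (Groupoid.inv g)) = D.H g by rw [ginv_inv])
    (show D.H (Groupoid.inv (Groupoid.inv g) ≫ Groupoid.inv h') = D.H (g ≫ Groupoid.inv h') by
      rw [ginv_inv])]
  rw [reassoc_of% (unit_braid (D.Sbar g ≫ D.S (Groupoid.inv g)) (L h' ≫ D.S h'))]
  rw [← tensorHom_comp_tensorHom]
  have ma : (D.S h' ⊗ₘ D.S (Groupoid.inv g)) ≫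
      (β_ (D.H (Groupoid.inv h')) (D.H (Groupoid.inv (Groupoid.inv g)))).hom ≫
      D.mul (Groupoid.inv (Groupoid.inv g)) (Groupoid.inv h') =
      D.mul h' (Groupoid.inv g) ≫ D.S (h' ≫ Groupoid.inv g) ≫
        eqToHom (by rw [ginv_comp]) := by
    rw [reassoc_of% (D.mul_antipode h' (Groupoid.inv g))]; simp
  simp only [Category.assoc]
  rw [reassoc_of% ma]
  rw [tensorHom_def' (L h') (D.Sbar g)]
  simp only [Category.assoc]
  rw [← leftUnitor_inv_naturality_assoc]
  rw [reassoc_of% (hL k j i h' (Groupoid.inv g))]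
  rw [reassoc_of% (D.Sbar_ε g)]
  simp

end HopfG
/-- if `L` is a right integral of the Hopf `𝒢`-algebra `H`, then the family
`L'_g = S_ḡ ∘ L_ḡ` is a left integral of `H`. -/
theorem rightIntegral_comp_antipode_isLeftIntegral
    (D : HopfG G C) (L : ∀ {i j : G} (g : i ⟶ j), 𝟙_ C ⟶ D.H g)
    (hL : D.IsRightIntegral L) :
    D.IsLeftIntegral (fun {i j} (g : i ⟶ j) =>
      L (Groupoid.inv g) ≫ D.S (Groupoid.inv g) ≫ eqToHom (by rw [ginv_inv])) := by
  intro i j k g h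
  dsimp only
  simp only [MonoidalCategory.whiskerLeft_comp, Category.assoc]
  rw [D.mul_transport_right g (ginv_inv h)
    (show D.H (Groupoid.inv (Groupoid.inv h)) = D.H h by rw [ginv_inv])
    (show D.H (g ≫ Groupoid.inv (Groupoid.inv h)) = D.H (g ≫ h) by rw [ginv_inv])]
  rw [← MonoidalCategory.whiskerLeft_comp_assoc]
  rw [reassoc_of% (D.rightIntegral_S (fun {a b} f => L f) hL g (Groupoid.inv h))]
  rw [D.LS_congr (fun {a b} f => L f) (ginv_comp g h)
    (show D.H (Groupoid.inv (Groupoid.inv (g ≫ h))) = D.H (g ≫ h) by rw [ginv_inv])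
    (show D.H (Groupoid.inv (Groupoid.inv h ≫ Groupoid.inv g)) = D.H (g ≫ h) by
      rw [ginv_comp, ginv_inv, ginv_inv])]
  simp

end HopfPaper
end

section
/- Let H be a selfdual ribbon Hopf 𝒢-algebra in a braided monoidal category, i.e. a ribbon Hopf 𝒢-algebra satisfying (l_i ⊗ id) ∘ σ_{i,i} = L_{1_i} for every object i of 𝒢. If l_i ∘ v_{1_i} ∘ η_i = id_𝟙 for every object i (axiom (d2)), then also l_i ∘ v_{1_i}^{-1} ∘ η_i = id_𝟙 for every object i (axiom (d2')). -/
open CategoryTheory MonoidalCategory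

universe w₁ w₂ v u

namespace HopfPaper

variable {G : Type w₂} [Groupoid.{w₁} G]
variable {C : Type u} [Category.{v} C] [MonoidalCategory C] [BraidedCategory C]

/-- `μ_{g,h} = (m_{g,1_i} ⊗ m_{1_j,h}) ∘ (id ⊗ σ_{i,j} ⊗ id)` for `g` with target `i` and
`h` with source `j`. -/
def muDef (D : HopfG G C) (σ : ∀ i j : G, 𝟙_ C ⟶ D.H (𝟙 i) ⊗ D.H (𝟙 j))
    {a i j b : G} (g : a ⟶ i) (h : j ⟶ b) : D.H g ⊗ D.H h ⟶ D.H g ⊗ D.H h :=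
  (D.H g ◁ (λ_ (D.H h)).inv) ≫ (D.H g ◁ (σ i j ▷ D.H h)) ≫
    (D.H g ◁ (α_ (D.H (𝟙 i)) (D.H (𝟙 j)) (D.H h)).hom) ≫
    (α_ (D.H g) (D.H (𝟙 i)) (D.H (𝟙 j) ⊗ D.H h)).inv ≫
    ((D.mul g (𝟙 i) ≫ eqToHom (by rw [Category.comp_id])) ⊗ₘ
      (D.mul (𝟙 j) h ≫ eqToHom (by rw [Category.id_comp])))

/-- `ρ^r_{h,k} = (m_{h,1_b} ⊗ id) ∘ (id ⊗ σ_{b,k})` for `h : a ⟶ b`. -/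
def rhoR (D : HopfG G C) (σ : ∀ i j : G, 𝟙_ C ⟶ D.H (𝟙 i) ⊗ D.H (𝟙 j))
    {a b : G} (h : a ⟶ b) (k : G) : D.H h ⟶ D.H h ⊗ D.H (𝟙 k) :=
  (ρ_ (D.H h)).inv ≫ (D.H h ◁ σ b k) ≫ (α_ (D.H h) (D.H (𝟙 b)) (D.H (𝟙 k))).inv ≫
    ((D.mul h (𝟙 b) ≫ eqToHom (by rw [Category.comp_id])) ▷ D.H (𝟙 k))

/-- `ρ^l_{h,k} = (id ⊗ m_{1_a,h}) ∘ (σ_{k,a} ⊗ id)` for `h : a ⟶ b`. -/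
def rhoL (D : HopfG G C) (σ : ∀ i j : G, 𝟙_ C ⟶ D.H (𝟙 i) ⊗ D.H (𝟙 j))
    (k : G) {a b : G} (h : a ⟶ b) : D.H h ⟶ D.H (𝟙 k) ⊗ D.H h :=
  (λ_ (D.H h)).inv ≫ (σ k a ▷ D.H h) ≫ (α_ (D.H (𝟙 k)) (D.H (𝟙 a)) (D.H h)).hom ≫
    (D.H (𝟙 k) ◁ (D.mul (𝟙 a) h ≫ eqToHom (by rw [Category.id_comp])))

/-- A ribbon Hopf `𝒢`-algebra: a unimodular Hopf `𝒢`-algebra with ribbon morphisms `v` and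
the induced copairings `σ` satisfying the axioms (r1)–(r11) of Bobtcheva–Piergallini. -/
structure RibbonG (G : Type w₂) [Groupoid.{w₁} G]
    (C : Type u) [Category.{v} C] [MonoidalCategory C] [BraidedCategory C]
    extends HopfG G C where
  /-- left cointegral -/
  l : ∀ i : G, H (𝟙 i) ⟶ 𝟙_ C
  /-- two-sided integral -/
  L : ∀ {i j : G} (g : i ⟶ j), 𝟙_ C ⟶ H g
  /-- (i1) `l` is a left cointegral -/
  l_coint : ∀ i : G, Δ (𝟙 i) ≫ (H (𝟙 i) ◁ l i) ≫ (ρ_ (H (𝟙 i))).hom = l i ≫ η i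
  /-- (i2) `L` is a right integral -/
  L_int : ∀ (i j k : G) (g : i ⟶ j) (h : j ⟶ k),
    (λ_ (H h)).inv ≫ (L g ▷ H h) ≫ mul g h = ε h ≫ L (g ≫ h)
  /-- (i3) -/
  lL : ∀ i : G, L (𝟙 i) ≫ l i = 𝟙 (𝟙_ C)
  /-- (i3') -/
  lSL : ∀ i : G, L (𝟙 i) ≫ S (𝟙 i) ≫ eqToHom (by rw [ginv_id]) ≫ l i = 𝟙 (𝟙_ C)
  /-- (i4) `S`-invariance of the integral -/
  SL : ∀ {i j : G} (g : i ⟶ j), L g ≫ S g = L (Groupoid.inv g)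
  /-- (i5) `S`-invariance of the cointegral -/
  lS : ∀ i : G, S (𝟙 i) ≫ eqToHom (by rw [ginv_id]) ≫ l i = l i
  /-- the ribbon morphism -/
  v : ∀ {i j : G} (g : i ⟶ j), H g ⟶ H g
  /-- the inverse of the ribbon morphism -/
  vinv : ∀ {i j : G} (g : i ⟶ j), H g ⟶ H g
  v_vinv : ∀ {i j : G} (g : i ⟶ j), v g ≫ vinv g = 𝟙 (H g)
  vinv_v : ∀ {i j : G} (g : i ⟶ j), vinv g ≫ v g = 𝟙 (H g)
  /-- (r2) `ε`-invariance -/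
  v_ε : ∀ {i j : G} (g : i ⟶ j), v g ≫ ε g = ε g
  /-- (r3) `L`-invariance -/
  v_L : ∀ {i j : G} (g : i ⟶ j), L g ≫ v g = L g
  /-- (r4) `S`-invariance -/
  v_S : ∀ {i j : G} (g : i ⟶ j), v g ≫ S g = S g ≫ v (Groupoid.inv g)
  /-- (r5) centrality -/
  v_central_l : ∀ {i j k : G} (g : i ⟶ j) (h : j ⟶ k),
    (v g ▷ H h) ≫ mul g h = mul g h ≫ v (g ≫ h)
  /-- (r5') centrality -/
  v_central_r : ∀ {i j k : G} (g : i ⟶ j) (h : j ⟶ k),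
    (H g ◁ v h) ≫ mul g h = mul g h ≫ v (g ≫ h)
  /-- (b3) naturality of the braiding w.r.t. `v` holds automatically in `C`; copairings: -/
  σ : ∀ i j : G, 𝟙_ C ⟶ H (𝟙 i) ⊗ H (𝟙 j)
  /-- (r6) -/
  σ_diag : ∀ i : G, σ i i =
    η i ≫ v (𝟙 i) ≫ Δ (𝟙 i) ≫
      (vinv (𝟙 i) ⊗ₘ (S (𝟙 i) ≫ eqToHom (by rw [ginv_id]) ≫ vinv (𝟙 i)))
  /-- (r7) -/
  σ_off : ∀ i j : G, i ≠ j → σ i j = (λ_ (𝟙_ C)).inv ≫ (η i ⊗ₘ η j)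
  /-- (r8) `σ` is a Hopf copairing: comultiplicativity in the first variable -/
  cop_Δ_l : ∀ i j : G, σ i j ≫ (Δ (𝟙 i) ▷ H (𝟙 j)) =
    σ i j ≫ (H (𝟙 i) ◁ (λ_ (H (𝟙 j))).inv) ≫ (H (𝟙 i) ◁ (σ i j ▷ H (𝟙 j))) ≫
      (H (𝟙 i) ◁ (α_ (H (𝟙 i)) (H (𝟙 j)) (H (𝟙 j))).hom) ≫
      (H (𝟙 i) ◁ (H (𝟙 i) ◁ (mul (𝟙 j) (𝟙 j) ≫ eqToHom (by rw [Category.id_comp])))) ≫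
      (α_ (H (𝟙 i)) (H (𝟙 i)) (H (𝟙 j))).inv
  /-- (r8') comultiplicativity in the second variable -/
  cop_Δ_r : ∀ i j : G, σ i j ≫ (H (𝟙 i) ◁ Δ (𝟙 j)) =
    σ i j ≫ ((ρ_ (H (𝟙 i))).inv ▷ H (𝟙 j)) ≫ ((H (𝟙 i) ◁ σ i j) ▷ H (𝟙 j)) ≫
      ((α_ (H (𝟙 i)) (H (𝟙 i)) (H (𝟙 j))).inv ▷ H (𝟙 j)) ≫
      (((mul (𝟙 i) (𝟙 i) ≫ eqToHom (by rw [Category.id_comp])) ▷ H (𝟙 j)) ▷ H (𝟙 j)) ≫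
      (α_ (H (𝟙 i)) (H (𝟙 j)) (H (𝟙 j))).hom
  /-- (r9) -/
  cop_ε_l : ∀ i j : G, σ i j ≫ (ε (𝟙 i) ▷ H (𝟙 j)) ≫ (λ_ (H (𝟙 j))).hom = η j
  /-- (r9') -/
  cop_ε_r : ∀ i j : G, σ i j ≫ (H (𝟙 i) ◁ ε (𝟙 j)) ≫ (ρ_ (H (𝟙 i))).hom = η i
  /-- (r10) -/
  r10 : ∀ {s t : G} (g : s ⟶ t),
    vinv g ≫ Δ g =
      Δ g ≫ (β_ (H g) (H g)).inv ≫ (vinv g ⊗ₘ vinv g) ≫ muDef toHopfG σ g g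
  /-- (r11) -/
  r11 : ∀ {a i j b : G} (g : a ⟶ i) (h : j ⟶ b),
    (rhoL toHopfG σ j g ⊗ₘ rhoR toHopfG σ h i) ≫
      (α_ (H (𝟙 j)) (H g) (H h ⊗ H (𝟙 i))).hom ≫
      (H (𝟙 j) ◁ (α_ (H g) (H h) (H (𝟙 i))).inv) ≫
      (H (𝟙 j) ◁ ((muDef toHopfG σ g h ≫ (β_ (H h) (H g)).inv ≫ muDef toHopfG σ h g) ▷
        H (𝟙 i))) ≫
      (H (𝟙 j) ◁ (α_ (H h) (H g) (H (𝟙 i))).hom) ≫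
      (α_ (H (𝟙 j)) (H h) (H g ⊗ H (𝟙 i))).inv ≫
      ((((S (𝟙 j) ≫ eqToHom (by rw [ginv_id])) ▷ H h) ≫ mul (𝟙 j) h ≫
          eqToHom (by rw [Category.id_comp])) ⊗ₘ
        ((H g ◁ (S (𝟙 i) ≫ eqToHom (by rw [ginv_id]))) ≫ mul g (𝟙 i) ≫
          eqToHom (by rw [Category.comp_id]))) =
      (β_ (H g) (H h)).hom

end HopfPaper

namespace HopfPaper

variable {G : Type w₂} [Groupoid.{w₁} G]
variable {C : Type u} [Category.{v} C] [MonoidalCategory C] [BraidedCategory C]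

/-- in a selfdual ribbon Hopf `𝒢`-algebra (axiom (d1)), the normalization
(d2) `l_i ∘ v_{1_i} ∘ η_i = id` implies (d2') `l_i ∘ v_{1_i}⁻¹ ∘ η_i = id`. -/
theorem selfdual_d2_implies_d2' (R : RibbonG G C)
    (d1 : ∀ i : G, R.σ i i ≫ (R.l i ▷ R.H (𝟙 i)) ≫ (λ_ (R.H (𝟙 i))).hom = R.L (𝟙 i))
    (d2 : ∀ i : G, R.η i ≫ R.v (𝟙 i) ≫ R.l i = 𝟙 (𝟙_ C)) :
    ∀ i : G, R.η i ≫ R.vinv (𝟙 i) ≫ R.l i = 𝟙 (𝟙_ C) := by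
  have key : ∀ {A B : C} (f : A ⟶ 𝟙_ C) (g : B ⟶ 𝟙_ C),
      (f ▷ B) ≫ (λ_ B).hom ≫ g = (A ◁ g) ≫ (ρ_ A).hom ≫ f := by
    intro A B f g
    rw [← MonoidalCategory.leftUnitor_naturality, ← Category.assoc,
      ← MonoidalCategory.whisker_exchange]
    simp [MonoidalCategory.unitors_equal]
  intro i
  have hX : (R.S (𝟙 i) ≫ eqToHom (by rw [ginv_id]) ≫ R.vinv (𝟙 i)) ≫
      (R.v (𝟙 i) ≫ R.l i) = R.l i := by
    simp only [Category.assoc]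
    rw [reassoc_of% R.vinv_v (𝟙 i)]
    exact R.lS i
  have h2 : R.L (𝟙 i) ≫ R.v (𝟙 i) ≫ R.l i = 𝟙 (𝟙_ C) := by
    rw [← Category.assoc, R.v_L, R.lL]
  rw [← d1 i, R.σ_diag i] at h2
  simp only [Category.assoc] at h2
  rw [tensorHom_def'] at h2
  simp only [Category.assoc] at h2
  rw [← comp_whiskerRight_assoc,
    key (R.vinv (𝟙 i) ≫ R.l i) (R.v (𝟙 i) ≫ R.l i),
    ← MonoidalCategory.whiskerLeft_comp_assoc, hX,
    reassoc_of% R.l_coint i, reassoc_of% d2 i] at h2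
  exact h2

end HopfPaper
end

section
/- Let H be a unimodular Hopf 𝒢-algebra in a braided monoidal category equipped with invertible morphisms v_g : H_g → H_g satisfying ε_g ∘ v_g = ε_g (axiom (r2)), S_g ∘ v_g = v_ḡ ∘ S_g, and the centrality conditions m_{g,h} ∘ (v_g ⊗ id) = v_{gh} ∘ m_{g,h} = m_{g,h} ∘ (id ⊗ v_h) for all composable g, h. Then v_g ∘ L_g = L_g for every g ∈ 𝒢 (axiom (r3)). -/
open CategoryTheory MonoidalCategory

universe w₁ w₂ v u

namespace HopfPaper

open HopfG

variable {G : Type w₂} [Groupoid.{w₁} G]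
variable {C : Type u} [Category.{v} C] [MonoidalCategory C] [BraidedCategory C]

/-- for a unimodular Hopf `𝒢`-algebra with invertible `v` satisfying (r2),
`S`-invariance and centrality, the integral is `v`-invariant: `v_g ∘ L_g = L_g` (axiom (r3)). -/
theorem integral_v_invariant
    (D : HopfG G C) (l : ∀ i : G, D.H (𝟙 i) ⟶ 𝟙_ C)
    (L : ∀ {i j : G} (g : i ⟶ j), 𝟙_ C ⟶ D.H g)
    (hl : D.IsLeftCointegral l) (hL : D.IsRightIntegral L)
    (hn : ∀ i : G, L (𝟙 i) ≫ l i = 𝟙 (𝟙_ C))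
    (hn' : ∀ i : G, L (𝟙 i) ≫ D.S (𝟙 i) ≫ eqToHom (by rw [ginv_id]) ≫ l i = 𝟙 (𝟙_ C))
    (hLS : ∀ {i j : G} (g : i ⟶ j), L g ≫ D.S g = L (Groupoid.inv g))
    (hlS : ∀ i : G, D.S (𝟙 i) ≫ eqToHom (by rw [ginv_id]) ≫ l i = l i)
    (v vinv : ∀ {i j : G} (g : i ⟶ j), D.H g ⟶ D.H g)
    (hv : ∀ {i j : G} (g : i ⟶ j), v g ≫ vinv g = 𝟙 (D.H g))
    (hv' : ∀ {i j : G} (g : i ⟶ j), vinv g ≫ v g = 𝟙 (D.H g))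
    (hvε : ∀ {i j : G} (g : i ⟶ j), v g ≫ D.ε g = D.ε g)
    (hvS : ∀ {i j : G} (g : i ⟶ j), v g ≫ D.S g = D.S g ≫ v (Groupoid.inv g))
    (hvc : ∀ {i j k : G} (g : i ⟶ j) (h : j ⟶ k),
      (v g ▷ D.H h) ≫ D.mul g h = D.mul g h ≫ v (g ≫ h))
    (hvc' : ∀ {i j k : G} (g : i ⟶ j) (h : j ⟶ k),
      (D.H g ◁ v h) ≫ D.mul g h = D.mul g h ≫ v (g ≫ h)) :
    ∀ (i j : G) (g : i ⟶ j), L g ≫ v g = L g := by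
  intro i j g
  have hve : ∀ {a b : G} (f f' : a ⟶ b) (h : f = f'),
      v f ≫ eqToHom (show D.H f = D.H f' by rw [h]) =
        eqToHom (show D.H f = D.H f' by rw [h]) ≫ v f' := by
    intro a b f f' h; subst h; simp
  have hLe : ∀ {a b : G} (f f' : a ⟶ b) (h : f = f'),
      L f ≫ eqToHom (show D.H f = D.H f' by rw [h]) = L f' := by
    intro a b f f' h; subst h; simp
  set u : 𝟙_ C ⟶ D.H (𝟙 j) := D.η j ≫ v (𝟙 j) with hu
  have e : D.H (g ≫ 𝟙 j) = D.H g := by rw [Category.comp_id]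
  -- step 1: `v g` is right multiplication by `u`
  have step1 : v g = (ρ_ (D.H g)).inv ≫ (D.H g ◁ u) ≫ D.mul g (𝟙 j) ≫ eqToHom e := by
    have h1 : (D.H g ◁ u) ≫ D.mul g (𝟙 j) ≫ eqToHom e =
        (D.H g ◁ D.η j) ≫ D.mul g (𝟙 j) ≫ eqToHom e ≫ v g := by
      rw [hu, MonoidalCategory.whiskerLeft_comp, Category.assoc, ← Category.assoc (D.H g ◁ v (𝟙 j)),
        hvc' g (𝟙 j), Category.assoc, hve (g ≫ 𝟙 j) g (Category.comp_id g)]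
    rw [h1]
    have h2 := D.mul_one g
    symm
    calc (ρ_ (D.H g)).inv ≫ (D.H g ◁ D.η j) ≫ D.mul g (𝟙 j) ≫ eqToHom e ≫ v g
        = (ρ_ (D.H g)).inv ≫ ((D.H g ◁ D.η j) ≫ D.mul g (𝟙 j) ≫ eqToHom e) ≫ v g := by
          simp only [Category.assoc]
      _ = (ρ_ (D.H g)).inv ≫ (ρ_ (D.H g)).hom ≫ v g := by rw [h2]
      _ = v g := by simp
  -- main computation
  have key : L g ≫ (ρ_ (D.H g)).inv ≫ (D.H g ◁ u) =
      u ≫ (λ_ (D.H (𝟙 j))).inv ≫ (L g ▷ D.H (𝟙 j)) := by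
    trans (λ_ (𝟙_ C)).inv ≫ (L g ⊗ₘ u)
    · simp [MonoidalCategory.tensorHom_def, MonoidalCategory.unitors_inv_equal,
        ← MonoidalCategory.rightUnitor_inv_naturality_assoc]
    · simp [MonoidalCategory.tensorHom_def', ← MonoidalCategory.leftUnitor_inv_naturality_assoc]
  have huε : u ≫ D.ε (𝟙 j) = 𝟙 (𝟙_ C) := by
    rw [hu, Category.assoc, hvε (𝟙 j), D.ε_one j]
  calc L g ≫ v g
      = (L g ≫ (ρ_ (D.H g)).inv ≫ (D.H g ◁ u)) ≫ D.mul g (𝟙 j) ≫ eqToHom e := by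
        rw [step1]; simp only [Category.assoc]
    _ = u ≫ ((λ_ (D.H (𝟙 j))).inv ≫ (L g ▷ D.H (𝟙 j)) ≫ D.mul g (𝟙 j)) ≫ eqToHom e := by
        rw [key]; simp only [Category.assoc]
    _ = u ≫ (D.ε (𝟙 j) ≫ L (g ≫ 𝟙 j)) ≫ eqToHom e := by rw [hL i j j g (𝟙 j)]
    _ = L (g ≫ 𝟙 j) ≫ eqToHom e := by
        rw [← Category.assoc, ← Category.assoc, huε]; simp
    _ = L g := hLe (g ≫ 𝟙 j) g (Category.comp_id g)

end HopfPaper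
end
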